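/- For an odd prime N, the quadratic Gauss sum g_N = Σ_{n=0}^{N-1} exp(2πi n²/N) equals √N if N ≡ 1 (mod 4), and i√N if N ≡ 3 (mod 4). -/

import Mathlib

open Complex

open Polynomial Finset
set_option linter.unusedSectionVars false

section Helpers
variable {R : Type*} [CommRing R]

lemma trunc_pow (z : R) (M : ℕ) (hz : z ^ (M + 1) = 0) (e : ℕ) :
    (1 + z) ^ e = ∑ j ∈ range (M + 1), (e.choose j : R) * z ^ j := by
  rw [add_comm, add_pow]
  rcases le_total e M with h | h
  · rw [← Finset.sum_subset (Finset.range_subset_range.mpr (by omega) : range (e + 1) ⊆ range (M + 1))]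
    · exact Finset.sum_congr rfl fun j hj => by ring
    · intro j hj hj2
      simp only [mem_range] at hj hj2
      rw [Nat.choose_eq_zero_of_lt (by omega)]
      simp
  · rw [← Finset.sum_subset (Finset.range_subset_range.mpr (by omega) : range (M + 1) ⊆ range (e + 1))]
    · exact Finset.sum_congr rfl fun j hj => by ring
    · intro j hj hj2
      simp only [mem_range] at hj hj2
      have hzj : z ^ j = 0 := by
        have : z ^ j = z ^ (M + 1) * z ^ (j - (M + 1)) := by
          rw [← pow_add]; congr 1; omega
        rw [this, hz, zero_mul]
      rw [hzj]; ring
end Helpers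

noncomputable section GaussKey

variable (N m : ℕ)

def Pg : Polynomial ℤ := ∑ n ∈ range N, X ^ (n ^ 2 % N)

def Pp : Polynomial ℤ := ∏ k ∈ range m, (X ^ (2 * k + 1) - X ^ (N - (2 * k + 1)))

abbrev Bq := Polynomial (ZMod N) ⧸ Ideal.span {(X : Polynomial (ZMod N)) ^ (m + 1)}

def yy : Bq N m := Ideal.Quotient.mk _ X

def φφ : ZMod N →+* Bq N m := (Ideal.Quotient.mk _).comp Polynomial.C

def Θ : Polynomial ℤ →+* Bq N m := Polynomial.eval₂RingHom (Int.castRingHom _) (1 - yy N m)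

lemma yy_pow_succ : (yy N m) ^ (m + 1) = 0 := by
  rw [yy, ← map_pow, Ideal.Quotient.eq_zero_iff_mem]
  exact Ideal.subset_span rfl

lemma neg_yy_pow_succ : (-yy N m) ^ (m + 1) = 0 := by
  rw [show (-yy N m) = (-1) * yy N m by ring, mul_pow, yy_pow_succ, mul_zero]

lemma natCast_Bq_self : ((N : ℕ) : Bq N m) = 0 := by
  rw [← map_natCast (φφ N m) N, ZMod.natCast_self, map_zero]

lemma natCast_Bq_eq_zero {c : ℕ} (h : N ∣ c) : ((c : ℕ) : Bq N m) = 0 := by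
  obtain ⟨d, rfl⟩ := h
  rw [Nat.cast_mul, natCast_Bq_self, zero_mul]

lemma Θ_X_pow (t : ℕ) : Θ N m (X ^ t) = (1 - yy N m) ^ t := by
  rw [Θ, coe_eval₂RingHom, eval₂_X_pow]

variable {N m}
variable (hN : N.Prime) (hm : N = 2 * m + 1) (hm1 : 1 ≤ m)
include hN hm hm1

lemma one_sub_yy_pow_N : (1 - yy N m) ^ N = 1 := by
  rw [show (1 - yy N m) = 1 + (-yy N m) by ring, trunc_pow _ m (neg_yy_pow_succ N m)]
  rw [Finset.sum_eq_single_of_mem 0 (by simp)]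
  · simp
  · intro j hj hj0
    rw [natCast_Bq_eq_zero N m (hN.dvd_choose_self hj0 (by simp only [mem_range] at hj; omega)),
      zero_mul]

lemma yy_pow_m_mul (e : ℕ) : (yy N m) ^ m * (1 - yy N m) ^ e = (yy N m) ^ m := by
  rw [show (1 - yy N m) = 1 + (-yy N m) by ring, trunc_pow _ m (neg_yy_pow_succ N m),
    Finset.mul_sum, Finset.sum_eq_single_of_mem 0 (by simp)]
  · simp
  · intro j hj hj0
    have hyj : (yy N m) ^ m * (yy N m) ^ j = 0 := by
      have : m + j = (m + 1) + (j - 1) := by omega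
      rw [← pow_add, this, pow_add, yy_pow_succ, zero_mul]
    calc (yy N m) ^ m * ((e.choose j : Bq N m) * (-yy N m) ^ j)
        = (e.choose j : Bq N m) * (-1) ^ j * ((yy N m) ^ m * (yy N m) ^ j) := by
          ring
      _ = 0 := by rw [hyj, mul_zero]

lemma Θ_cyclotomic : Θ N m (Polynomial.cyclotomic N ℤ) = 0 := by
  haveI : Fact N.Prime := ⟨hN⟩
  rw [Polynomial.cyclotomic_prime, map_sum]
  have h1 : ∀ i, Θ N m (X ^ i) = (1 - yy N m) ^ i := Θ_X_pow N m
  simp only [h1]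
  have h2 : ∀ i, (1 - yy N m) ^ i =
      ∑ j ∈ range (m + 1), (i.choose j : Bq N m) * (-yy N m) ^ j := by
    intro i
    rw [show (1 - yy N m) = 1 + (-yy N m) by ring, trunc_pow _ m (neg_yy_pow_succ N m)]
  simp only [h2]
  rw [Finset.sum_comm]
  apply Finset.sum_eq_zero
  intro j hj
  rw [← Finset.sum_mul]
  have : ∑ i ∈ range N, (i.choose j : Bq N m) = ((∑ i ∈ range N, i.choose j : ℕ) : Bq N m) := by
    rw [Nat.cast_sum]
  rw [this]
  have hsum : ∑ i ∈ range N, i.choose j = N.choose (j + 1) := by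
    rw [show N = (N - 1) + 1 by omega, ← Nat.sum_Icc_choose]
    refine (Finset.sum_subset ?_ ?_).symm
    · intro i hi
      simp only [mem_Icc, mem_range] at *
      omega
    · intro i hi hi2
      simp only [mem_Icc, mem_range] at hi hi2
      exact Nat.choose_eq_zero_of_lt (by omega)
  rw [hsum, natCast_Bq_eq_zero N m
    (hN.dvd_choose_self (by omega) (by simp only [mem_range] at hj; omega)), zero_mul]

omit hN hm hm1

lemma sum_pow_card_sub_one [Fact N.Prime] (h2 : 2 ≤ N) :
    ∑ x : ZMod N, x ^ (N - 1) = -1 := by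
  rw [Finset.sum_eq_sum_sdiff_singleton_add (Finset.mem_univ (0 : ZMod N))]
  rw [zero_pow (by omega), add_zero]
  have h1 : ∀ x ∈ Finset.univ \ {(0 : ZMod N)}, x ^ (N - 1) = 1 := by
    intro x hx
    simp only [Finset.mem_sdiff, Finset.mem_singleton] at hx
    exact ZMod.pow_card_sub_one_eq_one hx.2
  rw [Finset.sum_congr rfl h1, Finset.sum_const, Finset.card_sdiff_of_subset (by simp)]
  simp only [Finset.card_univ, ZMod.card, Finset.card_singleton, nsmul_eq_mul, mul_one]
  have : ((N - 1 : ℕ) : ZMod N) + 1 = 0 := by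
    rw [← Nat.cast_one (R := ZMod N), ← Nat.cast_add, show N - 1 + 1 = N by omega,
      ZMod.natCast_self]
  linear_combination this

lemma sum_eval_eq [Fact N.Prime] (F : Polynomial (ZMod N)) (hdeg : F.natDegree < N) :
    ∑ x : ZMod N, F.eval x = -(F.coeff (N - 1)) := by
  have h2 : 2 ≤ N := (Fact.out : N.Prime).two_le
  have heval : ∀ x : ZMod N, F.eval x = ∑ e ∈ range N, F.coeff e * x ^ e := fun x =>
    F.eval_eq_sum_range' hdeg x
  rw [Finset.sum_congr rfl fun x _ => heval x, Finset.sum_comm]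
  have hsplit : range N = range ((N - 1) + 1) := by congr 1; omega
  rw [hsplit, Finset.sum_range_succ]
  have hzero : ∀ e ∈ range (N - 1), ∑ x : ZMod N, F.coeff e * x ^ e = 0 := by
    intro e he
    rw [← Finset.mul_sum]
    have : ∑ x : ZMod N, x ^ e = 0 := by
      have := FiniteField.sum_pow_lt_card_sub_one (ZMod N) e
        (by rw [ZMod.card]; simp only [mem_range] at he; omega)
      exact this
    rw [this, mul_zero]
  rw [Finset.sum_eq_zero hzero, zero_add, ← Finset.mul_sum, sum_pow_card_sub_one h2]
  ring

lemma sum_range_cast' {M : Type*} [AddCommMonoid M] [NeZero N] (f : ZMod N → M) :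
    ∑ n ∈ range N, f (n : ZMod N) = ∑ x : ZMod N, f x :=
  Finset.sum_nbij' (fun n => (n : ZMod N)) (fun x => x.val)
    (fun a _ => mem_univ _) (fun x _ => mem_range.mpr (ZMod.val_lt x))
    (fun a ha => ZMod.val_cast_of_lt (mem_range.mp ha))
    (fun x _ => ZMod.natCast_rightInverse x) (fun a _ => rfl)

include hN hm hm1 in
lemma choose_sq_sum (j : ℕ) (hj : j ≤ m) :
    ((j.factorial : ZMod N)) * ((∑ n ∈ range N, (n ^ 2).choose j : ℕ) : ZMod N) =
      if j = m then -1 else 0 := by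
  haveI : Fact N.Prime := ⟨hN⟩
  haveI : NeZero N := ⟨by omega⟩
  rw [Nat.cast_sum, Finset.mul_sum]
  have h1 : ∀ n : ℕ, (j.factorial : ZMod N) * ((n ^ 2).choose j : ZMod N) =
      ((descPochhammer (ZMod N) j).comp (X ^ 2)).eval ((n : ZMod N)) := by
    intro n
    rw [eval_comp, eval_pow, eval_X, ← Nat.cast_pow,
      descPochhammer_eval_eq_descFactorial, Nat.descFactorial_eq_factorial_mul_choose,
      Nat.cast_mul]
  rw [Finset.sum_congr rfl fun n _ => h1 n]
  set G := (descPochhammer (ZMod N) j).comp (X ^ 2) with hG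
  rw [sum_range_cast' (f := fun x => G.eval x)]
  have hdeg : G.natDegree = 2 * j := by
    rw [hG, natDegree_comp, descPochhammer_natDegree, natDegree_pow, natDegree_X]
    ring
  rw [sum_eval_eq G (by omega)]
  by_cases hjm : j = m
  · subst hjm
    have hmonic : G.Monic := by
      apply Polynomial.Monic.comp (monic_descPochhammer _ _) (monic_X_pow 2)
      simp [natDegree_X_pow]
    have : G.coeff (N - 1) = 1 := by
      have : N - 1 = G.natDegree := by omega
      rw [this, hmonic.coeff_natDegree]
    rw [this, if_pos rfl]
  · have : G.coeff (N - 1) = 0 := by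
      apply Polynomial.coeff_eq_zero_of_natDegree_lt
      omega
    rw [this, if_neg hjm, neg_zero]

lemma prod_add_mul' {R ι : Type*} [CommRing R] (z : R) (s : Finset ι) (b w : ι → R) :
    ∃ W, ∏ i ∈ s, (b i + z * w i) = ∏ i ∈ s, b i + z * W := by
  classical
  induction s using Finset.cons_induction with
  | empty => exact ⟨0, by simp⟩
  | cons a s ha ih =>
    obtain ⟨W, hW⟩ := ih
    refine ⟨w a * (∏ i ∈ s, b i + z * W) + b a * W, ?_⟩
    rw [Finset.prod_cons, Finset.prod_cons, hW]
    ring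

lemma scal_yy_eq_zero [Fact N.Prime] (a : ZMod N) (h : φφ N m a * (yy N m) ^ m = 0) :
    a = 0 := by
  by_contra ha
  have h2 : (Ideal.Quotient.mk (Ideal.span {(X : Polynomial (ZMod N)) ^ (m + 1)}))
      (C a * X ^ m) = 0 := by
    rw [map_mul, map_pow]; exact h
  rw [Ideal.Quotient.eq_zero_iff_mem, Ideal.mem_span_singleton] at h2
  have hne : (C a * X ^ m : Polynomial (ZMod N)) ≠ 0 :=
    mul_ne_zero (fun hc => ha (by simpa using congrArg (fun p => Polynomial.coeff p 0) hc))
      (pow_ne_zero _ Polynomial.X_ne_zero)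
  have hdeg := Polynomial.natDegree_le_of_dvd h2 hne
  rw [Polynomial.natDegree_X_pow] at hdeg
  have : (C a * X ^ m : Polynomial (ZMod N)).natDegree = m := by
    rw [Polynomial.natDegree_C_mul_X_pow _ _ ha]
  omega

lemma one_sub_yy_expand (hm1 : 1 ≤ m) (e : ℕ) :
    ∃ w, (1 - yy N m) ^ e = 1 - (e : Bq N m) * yy N m + (yy N m) ^ 2 * w := by
  obtain ⟨m', rfl⟩ : ∃ m', m = m' + 1 := ⟨m - 1, by omega⟩
  rw [show (1 - yy N (m' + 1)) = 1 + (-yy N (m' + 1)) by ring,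
    trunc_pow _ (m' + 1) (neg_yy_pow_succ N _)]
  refine ⟨∑ i ∈ range m', (e.choose (i + 2) : Bq N (m' + 1)) * (-yy N (m' + 1)) ^ i, ?_⟩
  rw [Finset.sum_range_succ', Finset.sum_range_succ']
  have h3 : ∀ i : ℕ, (e.choose (i + 1 + 1) : Bq N (m' + 1)) * (-yy N (m' + 1)) ^ (i + 1 + 1) =
      (yy N (m' + 1)) ^ 2 * ((e.choose (i + 2) : Bq N (m' + 1)) * (-yy N (m' + 1)) ^ i) := by
    intro i
    ring_nf
  rw [Finset.sum_congr rfl fun i _ => h3 i, ← Finset.mul_sum]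
  simp [Nat.choose_one_right, Nat.choose_zero_right]
  ring

include hN hm hm1 in
lemma Θ_Pg_eq : Θ N m (Pg N) =
    φφ N m ((∑ n ∈ range N, (n ^ 2).choose m : ℕ) : ZMod N) * (-yy N m) ^ m := by
  haveI : Fact N.Prime := ⟨hN⟩
  rw [Pg, map_sum]
  have h1 : ∀ n : ℕ, Θ N m (X ^ (n ^ 2 % N)) =
      ∑ j ∈ range (m + 1), ((n ^ 2).choose j : Bq N m) * (-yy N m) ^ j := by
    intro n
    rw [Θ_X_pow, ← pow_eq_pow_mod _ (one_sub_yy_pow_N hN hm hm1),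
      show (1 - yy N m) = 1 + (-yy N m) by ring, trunc_pow _ m (neg_yy_pow_succ N m)]
  rw [Finset.sum_congr rfl fun n _ => h1 n, Finset.sum_comm]
  have h2 : ∀ j, ∑ n ∈ range N, ((n ^ 2).choose j : Bq N m) * (-yy N m) ^ j =
      φφ N m ((∑ n ∈ range N, (n ^ 2).choose j : ℕ) : ZMod N) * (-yy N m) ^ j := by
    intro j
    rw [← Finset.sum_mul, map_natCast (φφ N m), Nat.cast_sum]
  rw [Finset.sum_congr rfl fun j _ => h2 j]
  rw [Finset.sum_eq_single_of_mem m (by simp)]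
  intro j hj hjm
  have hfac : (j.factorial : ZMod N) ≠ 0 := by
    rw [Ne, ZMod.natCast_eq_zero_iff, hN.dvd_factorial]
    simp only [mem_range] at hj
    omega
  have hS := choose_sq_sum hN hm hm1 j (by simp only [mem_range] at hj; omega)
  rw [if_neg hjm] at hS
  rcases mul_eq_zero.mp hS with h | h
  · exact absurd h hfac
  · rw [h, map_zero, zero_mul]

include hN hm hm1 in
lemma Θ_Pp_eq : Θ N m (Pp N m) =
    φφ N m (∏ k ∈ range m, -((2 * (2 * k + 1) : ℕ) : ZMod N)) * (yy N m) ^ m := by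
  haveI : Fact N.Prime := ⟨hN⟩
  rw [Pp, map_prod]
  have h1 : ∀ k, k < m → Θ N m (X ^ (2 * k + 1) - X ^ (N - (2 * k + 1))) =
      (1 - yy N m) ^ (N - (2 * k + 1)) * ((1 - yy N m) ^ (2 * (2 * k + 1)) - 1) := by
    intro k hk
    have hNt : (N - (2 * k + 1)) + 2 * (2 * k + 1) = N + (2 * k + 1) := by omega
    rw [map_sub, Θ_X_pow, Θ_X_pow, mul_sub, mul_one, ← pow_add, hNt,
      show (1 - yy N m) ^ (N + (2 * k + 1)) = (1 - yy N m) ^ (2 * k + 1) from by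
        rw [pow_add, one_sub_yy_pow_N hN hm hm1, one_mul]]
  rw [Finset.prod_congr rfl fun k hk => h1 k (mem_range.mp hk), Finset.prod_mul_distrib]
  have H : ∀ k : ℕ, ∃ w, (1 - yy N m) ^ (2 * (2 * k + 1)) - 1 =
      yy N m * (-((2 * (2 * k + 1) : ℕ) : Bq N m) + yy N m * w) := by
    intro k
    obtain ⟨w, hw⟩ := one_sub_yy_expand (m := m) (by omega) (2 * (2 * k + 1))
    exact ⟨w, by rw [hw]; push_cast; ring⟩
  choose w hw using H
  rw [Finset.prod_congr rfl fun k _ => hw k, Finset.prod_mul_distrib, Finset.prod_const,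
    Finset.card_range]
  obtain ⟨W, hW⟩ := prod_add_mul' (yy N m) (range m)
    (fun k => -((2 * (2 * k + 1) : ℕ) : Bq N m)) w
  rw [hW]
  have hkill : (yy N m) ^ m * (yy N m * W) = 0 := by
    rw [show (yy N m) ^ m * (yy N m * W) = (yy N m) ^ (m + 1) * W by ring, yy_pow_succ, zero_mul]
  rw [Finset.prod_pow_eq_pow_sum]
  rw [show ∀ (A : Bq N m) (E : ℕ), A ^ E * ((yy N m) ^ m *
      (∏ k ∈ range m, -((2 * (2 * k + 1) : ℕ) : Bq N m) + yy N m * W)) =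
      ((yy N m) ^ m * A ^ E) * ∏ k ∈ range m, -((2 * (2 * k + 1) : ℕ) : Bq N m)
      + A ^ E * ((yy N m) ^ m * (yy N m * W)) from fun A E => by ring]
  rw [hkill, mul_zero, add_zero, yy_pow_m_mul hN hm hm1]
  rw [map_prod]
  have : ∀ k : ℕ, φφ N m (-((2 * (2 * k + 1) : ℕ) : ZMod N)) =
      -((2 * (2 * k + 1) : ℕ) : Bq N m) := by
    intro k
    rw [map_neg, map_natCast]
  rw [Finset.prod_congr rfl fun k _ => this k]
  ring

lemma two_pow_mul_factorial_mul_prod_odd' (n : ℕ) :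
    2 ^ n * n.factorial * ∏ k ∈ range n, (2 * k + 1) = (2 * n).factorial := by
  induction n with
  | zero => simp
  | succ n ih =>
    have h2 : 2 * (n + 1) = (2 * n + 1) + 1 := by ring
    rw [Finset.prod_range_succ, h2, Nat.factorial_succ, Nat.factorial_succ,
      Nat.factorial_succ, ← ih]
    ring

include hN hm hm1 in
lemma md_eq : (m.factorial : ZMod N) * (∏ k ∈ range m, -((2 * (2 * k + 1) : ℕ) : ZMod N)) =
    (-1) ^ (m + 1) := by
  haveI : Fact N.Prime := ⟨hN⟩
  have h1 : ∏ k ∈ range m, -((2 * (2 * k + 1) : ℕ) : ZMod N) =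
      (-1) ^ m * ((∏ k ∈ range m, (2 * (2 * k + 1)) : ℕ) : ZMod N) := by
    rw [Nat.cast_prod]
    calc ∏ k ∈ range m, -((2 * (2 * k + 1) : ℕ) : ZMod N)
        = ∏ k ∈ range m, (-1) * ((2 * (2 * k + 1) : ℕ) : ZMod N) :=
          Finset.prod_congr rfl fun k _ => by ring
      _ = (-1) ^ m * ∏ k ∈ range m, ((2 * (2 * k + 1) : ℕ) : ZMod N) := by
          rw [Finset.prod_mul_distrib, Finset.prod_const, Finset.card_range]
  have hP : (∏ k ∈ range m, (2 * (2 * k + 1))) = 2 ^ m * ∏ k ∈ range m, (2 * k + 1) := by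
    rw [Finset.prod_mul_distrib, Finset.prod_const, Finset.card_range]
  rw [h1, hP]
  have h3 : (m.factorial : ZMod N) * ((-1) ^ m *
      ((2 ^ m * ∏ k ∈ range m, (2 * k + 1) : ℕ) : ZMod N)) =
      (-1) ^ m * ((2 ^ m * m.factorial * ∏ k ∈ range m, (2 * k + 1) : ℕ) : ZMod N) := by
    push_cast
    ring
  rw [h3, two_pow_mul_factorial_mul_prod_odd', show 2 * m = N - 1 by omega,
    ZMod.wilsons_lemma]
  ring

include hN hm hm1 in
lemma key_not_dvd : ¬ (Polynomial.cyclotomic N ℤ ∣ Pg N + Pp N m) := by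
  haveI : Fact N.Prime := ⟨hN⟩
  intro hdvd
  obtain ⟨G, hG⟩ := hdvd
  have h0 : Θ N m (Pg N + Pp N m) = 0 := by
    rw [hG, map_mul, Θ_cyclotomic hN hm hm1, zero_mul]
  rw [map_add, Θ_Pg_eq hN hm hm1, Θ_Pp_eq hN hm hm1] at h0
  set c : ZMod N := ((∑ n ∈ range N, (n ^ 2).choose m : ℕ) : ZMod N) with hc
  set d : ZMod N := ∏ k ∈ range m, -((2 * (2 * k + 1) : ℕ) : ZMod N) with hd
  have h1 : φφ N m ((-1) ^ m * c + d) * (yy N m) ^ m = 0 := by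
    have he : φφ N m ((-1) ^ m * c + d) * (yy N m) ^ m =
        φφ N m c * (-yy N m) ^ m + φφ N m d * (yy N m) ^ m := by
      rw [map_add, map_mul, map_pow, map_neg, map_one]
      ring
    rw [he, h0]
  have h2 : (-1 : ZMod N) ^ m * c + d = 0 := scal_yy_eq_zero _ h1
  have h3 : (m.factorial : ZMod N) * ((-1) ^ m * c + d) = 0 := by rw [h2, mul_zero]
  have hcs := choose_sq_sum hN hm hm1 m le_rfl
  rw [if_pos rfl] at hcs
  have hds := md_eq hN hm hm1
  have h4 : (2 : ZMod N) * (-1) ^ (m + 1) = 0 := by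
    have : (m.factorial : ZMod N) * ((-1) ^ m * c + d) =
        (-1) ^ m * ((m.factorial : ZMod N) * c) + (m.factorial : ZMod N) * d := by ring
    rw [this, hcs, hds] at h3
    linear_combination h3 - (2 : ZMod N) * (-1 : ZMod N) ^ m * hcs + 2 * hcs * (-1 : ZMod N) ^ m
  have h5 : (2 : ZMod N) = 0 := by
    have hu : ((-1 : ZMod N) ^ (m + 1)) * ((-1) ^ (m + 1)) = 1 := by
      rw [← pow_add]
      have : (-1 : ZMod N) ^ (m + 1 + (m + 1)) = ((-1 : ZMod N) ^ 2) ^ (m + 1) := by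
        rw [← pow_mul]; congr 1; ring
      rw [this]
      simp
    calc (2 : ZMod N) = (2 * (-1) ^ (m + 1)) * (-1) ^ (m + 1) := by
          rw [mul_assoc, hu, mul_one]
      _ = 0 := by rw [h4, zero_mul]
  rw [show (2 : ZMod N) = ((2 : ℕ) : ZMod N) by push_cast; ring,
    ZMod.natCast_eq_zero_iff] at h5
  have := Nat.le_of_dvd (by omega) h5
  omega

end GaussKey

noncomputable section GaussVal

open Polynomial Finset

variable {N m : ℕ} {ζ : ℂ}

lemma prod_range_two_mul'' {M : Type*} [CommMonoid M] (f : ℕ → M) (m : ℕ) :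
    ∏ i ∈ range (2 * m), f i = (∏ k ∈ range m, f (2 * k)) * ∏ k ∈ range m, f (2 * k + 1) := by
  induction m with
  | zero => simp
  | succ m ih =>
    have h : 2 * (m + 1) = (2 * m + 1) + 1 := by ring
    rw [h, Finset.prod_range_succ, Finset.prod_range_succ, ih,
      Finset.prod_range_succ, Finset.prod_range_succ, mul_assoc, mul_mul_mul_comm]

lemma P_sq (hζ : IsPrimitiveRoot ζ N) (hm : N = 2 * m + 1) (hm1 : 1 ≤ m) :
    (∏ k ∈ range m, (ζ ^ (2 * k + 1) - ζ ^ (N - (2 * k + 1)))) ^ 2 = (-1) ^ m * N := by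
  have hζN : ζ ^ N = 1 := hζ.pow_eq_one
  set f : ℕ → ℂ := fun s => ζ ^ s - ζ ^ (N - s) with hf
  have hfneg : ∀ s, 1 ≤ s → s ≤ N → f (N - s) = -f s := by
    intro s h1 h2
    simp only [hf]
    rw [show N - (N - s) = s by omega]
    ring
  have hQ : ∏ s ∈ Ico 1 N, f s = (-1) ^ m * (∏ k ∈ range m, f (2 * k + 1)) ^ 2 := by
    rw [Finset.prod_Ico_eq_prod_range, show N - 1 = 2 * m by omega,
      prod_range_two_mul'' (fun i => f (1 + i)) m]
    have hA : ∏ k ∈ range m, f (1 + 2 * k) = ∏ k ∈ range m, f (2 * k + 1) :=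
      Finset.prod_congr rfl fun k _ => by rw [show 1 + 2 * k = 2 * k + 1 by omega]
    have hB : ∏ k ∈ range m, f (1 + (2 * k + 1)) = ∏ k ∈ range m, (-1) * f (2 * (m - 1 - k) + 1) := by
      refine Finset.prod_congr rfl fun k hk => ?_
      have hk' := mem_range.mp hk
      rw [show 1 + (2 * k + 1) = N - (2 * (m - 1 - k) + 1) by omega,
        hfneg _ (by omega) (by omega)]
      ring
    have hC : ∏ k ∈ range m, f (2 * (m - 1 - k) + 1) = ∏ k ∈ range m, f (2 * k + 1) := by
      have := Finset.prod_range_reflect (fun k => f (2 * k + 1)) m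
      simpa using this
    rw [hA, hB, Finset.prod_mul_distrib, Finset.prod_const, Finset.card_range, hC]
    ring
  have hsplit : ∀ s ∈ Ico 1 N, f s = ζ ^ (N - s) * (ζ ^ (2 * s) - 1) := by
    intro s hs
    rw [mem_Ico] at hs
    simp only [hf]
    rw [mul_sub, mul_one, ← pow_add, show N - s + 2 * s = N + s by omega, pow_add, hζN, one_mul]
  have hzeta : ∏ s ∈ Ico 1 N, ζ ^ (N - s) = 1 := by
    rw [Finset.prod_pow_eq_pow_sum]
    have hsum : ∑ s ∈ Ico 1 N, (N - s) = m * N := by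
      rw [Finset.sum_Ico_eq_sum_range]
      have h1 : ∑ i ∈ range (N - 1), (N - (1 + i)) = ∑ i ∈ range (2 * m), (2 * m - i) := by
        rw [show N - 1 = 2 * m by omega]
        exact Finset.sum_congr rfl fun i hi => by
          have := mem_range.mp hi; omega
      have h2 : ∑ i ∈ range (2 * m), (2 * m - i) = ∑ i ∈ range (2 * m), (i + 1) := by
        have := Finset.sum_range_reflect (fun j => j + 1) (2 * m)
        rw [← this]
        exact Finset.sum_congr rfl fun i hi => by
          have := mem_range.mp hi; omega
      have h3 : ∀ K : ℕ, ∑ i ∈ range (2 * K), (i + 1) = K * (2 * K + 1) := by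
        intro K
        induction K with
        | zero => simp
        | succ K ih =>
          rw [show 2 * (K + 1) = (2 * K) + 1 + 1 by ring, Finset.sum_range_succ,
            Finset.sum_range_succ, ih]
          ring
      rw [h1, h2, h3, hm]
    rw [hsum, show m * N = N * m by ring, pow_mul, hζN, one_pow]
  have hdouble : ∏ s ∈ Ico 1 N, (ζ ^ (2 * s) - 1) = ∏ s ∈ Ico 1 N, (ζ ^ s - 1) := by
    apply Finset.prod_nbij' (fun s => if 2 * s < N then 2 * s else 2 * s - N)
      (fun t => if t % 2 = 0 then t / 2 else (t + N) / 2)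
    · intro s hs
      rw [mem_Ico] at *
      split_ifs <;> omega
    · intro t ht
      rw [mem_Ico] at *
      split_ifs <;> omega
    · intro s hs
      rw [mem_Ico] at hs
      split_ifs <;> omega
    · intro t ht
      rw [mem_Ico] at ht
      split_ifs <;> omega
    · intro s hs
      rw [mem_Ico] at hs
      split_ifs with h
      · rfl
      · have he : 2 * s = (2 * s - N) + N := by omega
        conv_lhs => rw [he, pow_add, hζN, mul_one]
  have hprod1 : ∏ s ∈ Ico 1 N, (ζ ^ s - 1) = N := by
    have hζ' : IsPrimitiveRoot ζ ((N - 1) + 1) := by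
      rwa [show (N - 1) + 1 = N by omega]
    have := hζ'.prod_pow_sub_one_eq_order
    rw [Finset.prod_Ico_eq_prod_range]
    have heven : (-1 : ℂ) ^ (N - 1) = 1 := by
      rw [show N - 1 = 2 * m by omega, pow_mul]
      norm_num
    have h2 : ∏ k ∈ range (N - 1), (ζ ^ (1 + k) - 1) = ∏ k ∈ range (N - 1), (ζ ^ (k + 1) - 1) :=
      Finset.prod_congr rfl fun k _ => by rw [add_comm]
    rw [h2]
    have h3 := congrArg (fun z => (-1 : ℂ) ^ (N - 1) * z) this
    rw [← mul_assoc, ← pow_add] at h3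
    have h4 : (-1 : ℂ) ^ ((N - 1) + (N - 1)) = 1 := by
      rw [show (N - 1) + (N - 1) = 2 * (N - 1) by ring, pow_mul]
      norm_num
    rw [h4, one_mul] at h3
    rw [h3, heven, one_mul]
    have hcast : ((N - 1 : ℕ) : ℂ) + 1 = (N : ℂ) := by
      rw [Nat.cast_sub (by omega : 1 ≤ N)]
      ring
    exact hcast
  have hQval : ∏ s ∈ Ico 1 N, f s = N := by
    rw [Finset.prod_congr rfl hsplit, Finset.prod_mul_distrib, hzeta, one_mul, hdouble, hprod1]
  rw [hQval] at hQ
  have hsign : ((-1 : ℂ) ^ m) * ((-1 : ℂ) ^ m) = 1 := by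
    rw [← pow_add, show m + m = 2 * m by ring, pow_mul]
    norm_num
  have h6 : (-1 : ℂ) ^ m * (∏ k ∈ range m, f (2 * k + 1)) ^ 2 = N := by
    rw [← hQ]
  have h7 : (∏ k ∈ range m, f (2 * k + 1)) ^ 2 = (-1 : ℂ) ^ m * N := by
    rw [← h6, ← mul_assoc, hsign, one_mul]
  exact h7

end GaussVal

noncomputable section GSq

open Polynomial Finset Complex

variable {N m : ℕ} {ζ : ℂ}

lemma g_sq (hN : N.Prime) (hm : N = 2 * m + 1) (hm1 : 1 ≤ m) (hζ : IsPrimitiveRoot ζ N) :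
    (∑ n ∈ range N, ζ ^ n ^ 2) ^ 2 = (-1) ^ m * N := by
  haveI : Fact N.Prime := ⟨hN⟩
  haveI : NeZero N := ⟨by omega⟩
  have hchar : ringChar (ZMod N) ≠ 2 := by
    rw [ZMod.ringChar_zmod_n]
    omega
  set ψ : AddChar (ZMod N) ℂ := AddChar.zmodChar N hζ.pow_eq_one with hψ
  set χ' : MulChar (ZMod N) ℂ :=
    (quadraticChar (ZMod N)).ringHomComp (Int.castRingHom ℂ) with hχ'
  have hψprim : ψ.IsPrimitive := AddChar.zmodChar_primitive_of_primitive_root N hζ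
  have step1 : ∑ n ∈ range N, ζ ^ n ^ 2 = ∑ x : ZMod N, ψ (x ^ 2) := by
    rw [← sum_range_cast' (N := N) (fun x : ZMod N => ψ (x ^ 2))]
    refine Finset.sum_congr rfl fun n _ => ?_
    rw [show ((n : ZMod N)) ^ 2 = ((n ^ 2 : ℕ) : ZMod N) by push_cast; ring,
      AddChar.zmodChar_apply']
  have step2 : ∑ x : ZMod N, ψ (x ^ 2) =
      ∑ y : ZMod N, ((univ.filter (fun x : ZMod N => x ^ 2 = y)).card : ℂ) * ψ y := by
    rw [← Finset.sum_fiberwise_of_maps_to (g := fun x : ZMod N => x ^ 2)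
      (fun x _ => mem_univ (x ^ 2)) (fun x => ψ (x ^ 2))]
    refine Finset.sum_congr rfl fun y _ => ?_
    rw [Finset.sum_congr rfl (fun x hx => by rw [(Finset.mem_filter.mp hx).2] :
      ∀ x ∈ univ.filter (fun x : ZMod N => x ^ 2 = y), ψ (x ^ 2) = ψ y),
      Finset.sum_const, nsmul_eq_mul]
  have step3 : ∀ y : ZMod N,
      ((univ.filter (fun x : ZMod N => x ^ 2 = y)).card : ℂ) = χ' y + 1 := by
    intro y
    have h := quadraticChar_card_sqrts hchar y
    rw [Set.toFinset_setOf] at h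
    have h2 := congrArg (fun z : ℤ => (z : ℂ)) h
    simp only [Int.cast_natCast, Int.cast_add, Int.cast_one] at h2
    rw [h2, hχ']
    simp [MulChar.ringHomComp]
  have step4 : ∑ x : ZMod N, ψ (x ^ 2) = gaussSum χ' ψ := by
    rw [step2, Finset.sum_congr rfl fun y _ => by rw [step3 y]]
    have : ∀ y : ZMod N, (χ' y + 1) * ψ y = χ' y * ψ y + ψ y := fun y => by ring
    rw [Finset.sum_congr rfl fun y _ => this y, Finset.sum_add_distrib]
    have hψne : ψ ≠ 1 := by
      intro h
      apply hζ.ne_one (by omega : 1 < N)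
      have h1 : ψ (1 : ZMod N) = 1 := by rw [h]; rfl
      rwa [hψ, AddChar.zmodChar_apply, ZMod.val_one N, pow_one] at h1
    rw [AddChar.sum_eq_zero_of_ne_one hψne, add_zero]
    rfl
  have hχ'1 : χ' ≠ 1 := by
    obtain ⟨a, ha⟩ := quadraticChar_exists_neg_one' hchar
    refine MulChar.ne_one_iff.mpr ⟨a, ?_⟩
    rw [hχ']
    simp only [MulChar.ringHomComp_apply, ha, eq_intCast, Int.cast_neg, Int.cast_one]
    norm_num
  have hχ'2 : χ'.IsQuadratic := (quadraticChar_isQuadratic (ZMod N)).comp _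
  have hgs := gaussSum_sq hχ'1 hχ'2 hψprim
  rw [step1, step4, hgs]
  have hneg : χ' (-1) = (-1 : ℂ) ^ m := by
    rw [hχ']
    simp only [MulChar.ringHomComp_apply]
    rw [quadraticChar_neg_one hchar, ZMod.card]
    rw [ZMod.χ₄_nat_eq_if_mod_four]
    rcases Nat.even_or_odd m with ⟨k, hk⟩ | ⟨k, hk⟩
    · rw [if_neg (by omega), if_pos (by omega), Even.neg_one_pow ⟨k, by omega⟩]
      norm_num
    · rw [if_neg (by omega), if_neg (by omega), Odd.neg_one_pow ⟨k, by omega⟩]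
      norm_num
  rw [hneg, ZMod.card]
end GSq

noncomputable section GEqP

open Polynomial Finset Complex

variable {N m : ℕ} {ζ : ℂ}

lemma g_eq_P (hN : N.Prime) (hm : N = 2 * m + 1) (hm1 : 1 ≤ m) (hζ : IsPrimitiveRoot ζ N) :
    ∑ n ∈ range N, ζ ^ n ^ 2 = ∏ k ∈ range m, (ζ ^ (2 * k + 1) - ζ ^ (N - (2 * k + 1))) := by
  set g := ∑ n ∈ range N, ζ ^ n ^ 2 with hg
  set P := ∏ k ∈ range m, (ζ ^ (2 * k + 1) - ζ ^ (N - (2 * k + 1))) with hP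
  have hsqg := g_sq hN hm hm1 hζ
  have hsqP := P_sq hζ hm hm1
  have hfac : (g - P) * (g + P) = 0 := by
    have : (g - P) * (g + P) = g ^ 2 - P ^ 2 := by ring
    rw [this, hg, hsqg, hP, hsqP, sub_self]
  rcases mul_eq_zero.mp hfac with h | h
  · exact sub_eq_zero.mp h
  · exfalso
    apply key_not_dvd hN hm hm1
    have haev : (Polynomial.aeval ζ) (Pg N + Pp N m) = 0 := by
      rw [map_add]
      have h1 : (Polynomial.aeval ζ) (Pg N) = g := by
        rw [Pg, map_sum, hg]
        refine Finset.sum_congr rfl fun n _ => ?_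
        rw [Polynomial.aeval_X_pow]
        exact (pow_eq_pow_mod _ hζ.pow_eq_one).symm
      have h2 : (Polynomial.aeval ζ) (Pp N m) = P := by
        rw [Pp, map_prod, hP]
        refine Finset.prod_congr rfl fun k _ => ?_
        rw [map_sub, Polynomial.aeval_X_pow, Polynomial.aeval_X_pow]
      rw [h1, h2, h]
    have hdvd : Polynomial.cyclotomic N ℚ ∣ (Pg N + Pp N m).map (Int.castRingHom ℚ) := by
      rw [Polynomial.cyclotomic_eq_minpoly_rat hζ (by omega : 0 < N)]
      apply minpoly.dvd ℚ ζ
      rw [show (Int.castRingHom ℚ) = algebraMap ℤ ℚ from rfl,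
        Polynomial.aeval_map_algebraMap]
      exact haev
    rw [← Polynomial.map_cyclotomic_int N ℚ] at hdvd
    exact (Polynomial.map_dvd_map (Int.castRingHom ℚ) Int.cast_injective
      (Polynomial.cyclotomic.monic N ℤ)).mp hdvd

end GEqP

section Final

open Polynomial Finset Complex

lemma sigma_split (l m : ℕ) (hl : l ≤ m) (f : ℕ → ℝ)
    (hpos : ∀ k < l, 0 < f k) (hneg : ∀ k, l ≤ k → k < m → f k < 0) :
    ∃ r : ℝ, 0 < r ∧ ∏ k ∈ range m, f k = (-1) ^ (m - l) * r := by
  refine ⟨(∏ k ∈ range l, f k) * ∏ k ∈ Ico l m, -f k, ?_, ?_⟩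
  · apply mul_pos (Finset.prod_pos fun k hk => hpos k (mem_range.mp hk))
      (Finset.prod_pos fun k hk => by
        have h := mem_Ico.mp hk
        have := hneg k h.1 h.2
        linarith)
  · rw [← Finset.prod_range_mul_prod_Ico f hl]
    have h2 : ∏ k ∈ Ico l m, f k = (-1) ^ (m - l) * ∏ k ∈ Ico l m, -f k := by
      calc ∏ k ∈ Ico l m, f k = ∏ k ∈ Ico l m, (-1) * (-f k) :=
            Finset.prod_congr rfl fun k _ => by ring
        _ = (-1) ^ (m - l) * ∏ k ∈ Ico l m, -f k := by
            rw [Finset.prod_mul_distrib, Finset.prod_const, Nat.card_Ico]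
    rw [h2]
    ring

/-- The quadratic Gauss sum for an odd prime `N`. -/
theorem quadratic_gauss_sum (N : ℕ) (hN : N.Prime) (hodd : Odd N) :
    (∑ n ∈ Finset.range N,
        Complex.exp (2 * (Real.pi : ℂ) * Complex.I * (n : ℂ) ^ 2 / N))
      = if N % 4 = 1 then (Real.sqrt N : ℂ) else Complex.I * (Real.sqrt N : ℂ) := by
  have hN2 : N ≠ 2 := by
    rintro rfl
    exact (by norm_num : ¬ Odd 2) hodd
  obtain ⟨m, hm⟩ : ∃ m, N = 2 * m + 1 := by
    obtain ⟨j, hj⟩ := hodd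
    exact ⟨j, by omega⟩
  have hm1 : 1 ≤ m := by
    have := hN.two_le
    omega
  have hN0 : (0 : ℝ) < N := by exact_mod_cast (by omega : 0 < N)
  set θ : ℕ → ℝ := fun k => 2 * Real.pi * (2 * k + 1) / N with hθ
  set ζ : ℂ := Complex.exp (2 * (Real.pi : ℂ) * Complex.I / N) with hζdef
  have hζ : IsPrimitiveRoot ζ N := Complex.isPrimitiveRoot_exp N (by omega)
  have hsum : (∑ n ∈ Finset.range N,
      Complex.exp (2 * (Real.pi : ℂ) * Complex.I * (n : ℂ) ^ 2 / N)) =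
      ∑ n ∈ range N, ζ ^ n ^ 2 := by
    refine Finset.sum_congr rfl fun n _ => ?_
    rw [hζdef, ← Complex.exp_nat_mul]
    congr 1
    push_cast
    ring
  rw [hsum, g_eq_P hN hm hm1 hζ]
  have hfactor : ∀ k, k < m → ζ ^ (2 * k + 1) - ζ ^ (N - (2 * k + 1)) =
      2 * Complex.I * ((Real.sin (θ k) : ℝ) : ℂ) := by
    intro k hk
    have hNne : (N : ℂ) ≠ 0 := by
      exact_mod_cast (by positivity : (N : ℝ) ≠ 0)
    have ht1 : ζ ^ (2 * k + 1) = Complex.exp (((θ k : ℝ) : ℂ) * Complex.I) := by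
      rw [hζdef, ← Complex.exp_nat_mul]
      congr 1
      rw [hθ]
      push_cast
      field_simp
    have ht2 : ζ ^ (N - (2 * k + 1)) =
        Complex.exp (((-θ k : ℝ) : ℂ) * Complex.I) := by
      rw [hζdef, ← Complex.exp_nat_mul]
      have harg : ((N - (2 * k + 1) : ℕ) : ℂ) * (2 * (Real.pi : ℂ) * Complex.I / N) =
          ((-θ k : ℝ) : ℂ) * Complex.I + 2 * (Real.pi : ℂ) * Complex.I := by
        have hcast : ((N - (2 * k + 1) : ℕ) : ℂ) = (N : ℂ) - (2 * (k : ℂ) + 1) := by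
          have h1 : (2 * k + 1) ≤ N := by omega
          rw [show (N - (2 * k + 1) : ℕ) = N - (2 * k + 1) from rfl]
          push_cast [h1]
          ring
        rw [hcast, hθ]
        push_cast
        field_simp
        ring
      rw [harg, Complex.exp_add, Complex.exp_two_pi_mul_I, mul_one]
    rw [ht1, ht2, Complex.exp_mul_I, Complex.exp_mul_I, Complex.ofReal_neg,
      Complex.cos_neg, Complex.sin_neg, ← Complex.ofReal_sin]
    ring
  have hP : ∏ k ∈ range m, (ζ ^ (2 * k + 1) - ζ ^ (N - (2 * k + 1))) =
      (2 * Complex.I) ^ m * ((∏ k ∈ range m, Real.sin (θ k) : ℝ) : ℂ) := by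
    rw [Finset.prod_congr rfl (fun k hk => hfactor k (mem_range.mp hk)),
      Finset.prod_mul_distrib, Finset.prod_const, Finset.card_range, Complex.ofReal_prod]
  have hPsq := P_sq hζ hm hm1
  have hsin_pos : ∀ k, 2 * (2 * k + 1) < N → 0 < Real.sin (θ k) := by
    intro k hk
    have hπ := Real.pi_pos
    apply Real.sin_pos_of_pos_of_lt_pi
    · rw [hθ]
      positivity
    · rw [hθ]
      have h' : (2 * (2 * (k : ℝ) + 1)) < N := by exact_mod_cast hk
      rw [div_lt_iff₀ hN0]
      nlinarith
  have hsin_neg : ∀ k, N < 2 * (2 * k + 1) → 2 * k + 1 < N → Real.sin (θ k) < 0 := by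
    intro k h1 h2
    have hπ := Real.pi_pos
    have h1' : (N : ℝ) < 2 * (2 * (k : ℝ) + 1) := by exact_mod_cast h1
    have h2' : (2 * (k : ℝ) + 1) < N := by exact_mod_cast h2
    have hθπ : Real.pi < θ k := by
      rw [hθ, lt_div_iff₀ hN0]
      nlinarith
    have hθ2π : θ k < 2 * Real.pi := by
      rw [hθ, div_lt_iff₀ hN0]
      nlinarith
    have hpos := Real.sin_pos_of_pos_of_lt_pi (x := θ k - Real.pi)
      (by linarith) (by linarith)
    have hs := Real.sin_sub_pi (θ k)
    rw [hs] at hpos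
    linarith
  have h4 : N % 4 = 1 ∨ N % 4 = 3 := by omega
  rcases h4 with h4 | h4
  · -- N ≡ 1 (mod 4)
    obtain ⟨l, hl⟩ : ∃ l, m = 2 * l := ⟨m / 2, by omega⟩
    obtain ⟨r, hr, hσ⟩ := sigma_split l m (by omega) (fun k => Real.sin (θ k))
      (fun k hk => hsin_pos k (by omega)) (fun k hk1 hk2 => hsin_neg k (by omega) (by omega))
    rw [show m - l = l by omega] at hσ
    have hsq1 : ((-1 : ℂ) ^ l) * ((-1 : ℂ) ^ l) = 1 := by
      rw [← pow_add, show l + l = 2 * l by ring, pow_mul]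
      norm_num
    have hIm : (Complex.I) ^ m = (-1 : ℂ) ^ l := by
      rw [hl, pow_mul, Complex.I_sq]
    have hPr : (2 * Complex.I) ^ m * (((-1 : ℝ) ^ l * r : ℝ) : ℂ) =
        (((2 : ℝ) ^ m * r : ℝ) : ℂ) := by
      rw [mul_pow, hIm]
      push_cast
      linear_combination (2 : ℂ) ^ m * r * hsq1
    rw [hP, hσ, hPr]
    rw [hP, hσ, hPr] at hPsq
    have hm2 : (-1 : ℂ) ^ m = 1 := by
      rw [hl, pow_mul]
      norm_num
    rw [hm2, one_mul] at hPsq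
    have hr2 : ((2 : ℝ) ^ m * r) ^ 2 = (N : ℝ) := by exact_mod_cast hPsq
    have hrpos : (0 : ℝ) < 2 ^ m * r := by positivity
    have hsqrt : Real.sqrt N = 2 ^ m * r := by
      rw [← hr2, Real.sqrt_sq hrpos.le]
    rw [if_pos h4, hsqrt]
  · -- N ≡ 3 (mod 4)
    obtain ⟨l, hl⟩ : ∃ l, m = 2 * l + 1 := ⟨m / 2, by omega⟩
    obtain ⟨r, hr, hσ⟩ := sigma_split (l + 1) m (by omega) (fun k => Real.sin (θ k))
      (fun k hk => hsin_pos k (by omega)) (fun k hk1 hk2 => hsin_neg k (by omega) (by omega))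
    rw [show m - (l + 1) = l by omega] at hσ
    have hsq1 : ((-1 : ℂ) ^ l) * ((-1 : ℂ) ^ l) = 1 := by
      rw [← pow_add, show l + l = 2 * l by ring, pow_mul]
      norm_num
    have hIm : (Complex.I) ^ m = (-1 : ℂ) ^ l * Complex.I := by
      rw [hl, pow_succ, pow_mul, Complex.I_sq]
    have hPr : (2 * Complex.I) ^ m * (((-1 : ℝ) ^ l * r : ℝ) : ℂ) =
        Complex.I * (((2 : ℝ) ^ m * r : ℝ) : ℂ) := by
      rw [mul_pow, hIm]
      push_cast
      linear_combination (2 : ℂ) ^ m * r * Complex.I * hsq1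
    rw [hP, hσ, hPr]
    rw [hP, hσ, hPr] at hPsq
    have hm2 : (-1 : ℂ) ^ m = -1 := by
      rw [hl, pow_succ, pow_mul]
      norm_num
    rw [hm2] at hPsq
    have hIx : (Complex.I * (((2 : ℝ) ^ m * r : ℝ) : ℂ)) ^ 2 =
        -((((2 : ℝ) ^ m * r : ℝ) : ℂ) ^ 2) := by
      rw [mul_pow, Complex.I_sq]
      ring
    rw [hIx, neg_one_mul, neg_inj] at hPsq
    have hr2 : ((2 : ℝ) ^ m * r) ^ 2 = (N : ℝ) := by exact_mod_cast hPsq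
    have hrpos : (0 : ℝ) < 2 ^ m * r := by positivity
    have hsqrt : Real.sqrt N = 2 ^ m * r := by
      rw [← hr2, Real.sqrt_sq hrpos.le]
    rw [if_neg (by omega), hsqrt]

end Final
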